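/- Let G be a finite group with subgroups H and K such that ℂ[G/H] ≅ ℂ[G/K] as G-representations. Then H and K have the same number of elements in each conjugacy class of G; in particular |H| = |K| and H = K whenever H is normal in G. -/

import Mathlib

lemma trace_permRep {G X : Type*} [Group G] [MulAction G X] [Fintype X] (g : G) :
    LinearMap.trace ℂ (MonoidAlgebra ℂ X) (Representation.ofMulAction ℂ G X g)
      = Nat.card {x : X // g • x = x} := by
  classical
  rw [LinearMap.trace_eq_matrix_trace ℂ (MonoidAlgebra.basis X ℂ)]
  rw [Matrix.trace]
  have : ∀ x : X, Matrix.diag (LinearMap.toMatrix (MonoidAlgebra.basis X ℂ)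
      (MonoidAlgebra.basis X ℂ) (Representation.ofMulAction ℂ G X g)) x
      = if g • x = x then (1 : ℂ) else 0 := by
    intro x
    rw [Matrix.diag_apply, LinearMap.toMatrix_apply]
    simp [MonoidAlgebra.basis, Representation.ofMulAction_single, Finsupp.single_apply]
  rw [Finset.sum_congr rfl (fun x _ => this x)]
  rw [Finset.sum_boole]
  rw [Nat.card_eq_fintype_card, Fintype.card_subtype]

lemma count_conj_mem_eq (G : Type*) [Group G] (H : Subgroup G) (g : G) :
    Nat.card {x : G // x⁻¹ * g * x ∈ H}
      = Nat.card H * Nat.card {q : G ⧸ H // g • q = q} := by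
  classical
  have h1 : {x : G // x⁻¹ * g * x ∈ H}
      ≃ (QuotientGroup.mk ⁻¹' {q : G ⧸ H | g • q = q} : Set G) := by
    apply Equiv.subtypeEquivRight
    intro x
    simp only [Set.mem_preimage, Set.mem_setOf_eq]
    have h0 : g • (QuotientGroup.mk x : G ⧸ H) = QuotientGroup.mk (g * x) := rfl
    rw [h0, eq_comm, QuotientGroup.eq, ← mul_assoc]
  rw [Nat.card_congr h1,
    Nat.card_congr (QuotientGroup.preimageMkEquivSubgroupProdSet H _), Nat.card_prod]
  rfl

lemma count_conj_mem_eq' (G : Type*) [Group G] [Finite G] (H : Subgroup G) (g : G) :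
    Nat.card {x : G // x⁻¹ * g * x ∈ H}
      = Nat.card (Subgroup.centralizer ({g} : Set G)) * ({x | IsConj g x} ∩ (H : Set G)).ncard := by
  classical
  have := Fintype.ofFinite G
  rw [Nat.card_eq_fintype_card, Fintype.card_subtype]
  have hcard : ({x | IsConj g x} ∩ (H : Set G)).ncard
      = (Finset.univ.filter (fun h => IsConj g h ∧ h ∈ H)).card := by
    rw [Set.ncard_eq_toFinset_card']
    congr 1
    ext x
    simp [Set.mem_toFinset]
  have hZ : Nat.card (Subgroup.centralizer ({g} : Set G))
      = (Finset.univ.filter (fun z => z ∈ Subgroup.centralizer ({g} : Set G))).card := by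
    rw [Nat.card_eq_fintype_card]
    exact Fintype.card_subtype _
  rw [hcard, hZ]
  rw [Finset.card_eq_sum_card_fiberwise
    (f := fun x => x⁻¹ * g * x) (t := Finset.univ.filter (fun h => IsConj g h ∧ h ∈ H))
    (by
      intro x hx
      simp only [Finset.coe_filter, Set.mem_setOf_eq, Finset.mem_filter, Finset.mem_univ, true_and] at hx ⊢
      refine ⟨?_, hx⟩
      rw [isConj_iff]
      exact ⟨x⁻¹, by group⟩)]
  rw [Finset.sum_congr rfl (fun h hh => ?_), Finset.sum_const, smul_eq_mul, mul_comm]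
  simp only [Finset.mem_filter, Finset.mem_univ, true_and] at hh
  obtain ⟨c, hc⟩ := hh.1
  set x₀ : G := (↑c : G)⁻¹ with hx₀def
  have hc' : x₀⁻¹ * g * x₀ = h := by
    have : (↑c : G) * g = h * ↑c := hc
    rw [hx₀def, inv_inv]
    rw [this]
    group
  apply Finset.card_nbij' (fun x => x₀ * x⁻¹) (fun z => z⁻¹ * x₀)
  · intro x hx
    simp only [Finset.coe_filter, Set.mem_setOf_eq, Finset.mem_filter, Finset.mem_univ, true_and] at hx
    have h1 : x⁻¹ * g * x = h := hx.2
    simp only [Finset.coe_filter, Set.mem_setOf_eq, Finset.mem_filter, Finset.mem_univ, true_and]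
    rw [Subgroup.mem_centralizer_singleton_iff]
    have hg : g * x₀ = x₀ * h := by rw [← hc']; group
    calc (x₀ * x⁻¹) * g = x₀ * (x⁻¹ * g * x) * x⁻¹ := by group
      _ = x₀ * h * x⁻¹ := by rw [h1]
      _ = (g * x₀) * x⁻¹ := by rw [hg]
      _ = g * (x₀ * x⁻¹) := by group
  · intro z hz
    simp only [Finset.coe_filter, Set.mem_setOf_eq, Finset.mem_filter, Finset.mem_univ, true_and] at hz ⊢
    rw [Subgroup.mem_centralizer_singleton_iff] at hz
    have h2 : z * g * z⁻¹ = g := by rw [hz]; group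
    have heq : (z⁻¹ * x₀)⁻¹ * g * (z⁻¹ * x₀) = h := by
      calc (z⁻¹ * x₀)⁻¹ * g * (z⁻¹ * x₀) = x₀⁻¹ * (z * g * z⁻¹) * x₀ := by group
        _ = x₀⁻¹ * g * x₀ := by rw [h2]
        _ = h := hc'
    exact ⟨by rw [heq]; exact hh.2, heq⟩
  · intro x _; group
  · intro z _; group

/-- If the complex permutation representations ℂ[G/H] and ℂ[G/K] are isomorphic,
then H and K meet each conjugacy class of G in sets of equal size; in particular
|H| = |K|, and H = K whenever H is normal in G. -/
theorem permRep_iso_implies_class_intersections_eq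
    {G : Type*} [Group G] [Finite G] (H K : Subgroup G)
    (e : ((G ⧸ H) →₀ ℂ) ≃ₗ[ℂ] ((G ⧸ K) →₀ ℂ))
    (he : ∀ (g : G) (x : (G ⧸ H) →₀ ℂ),
      e (Representation.ofMulAction ℂ G (G ⧸ H) g (MonoidAlgebra.ofCoeff x)).coeff
        = (Representation.ofMulAction ℂ G (G ⧸ K) g (MonoidAlgebra.ofCoeff (e x))).coeff) :
    (∀ g : G, ({x | IsConj g x} ∩ (H : Set G)).ncard
        = ({x | IsConj g x} ∩ (K : Set G)).ncard) ∧
      Nat.card H = Nat.card K ∧ (H.Normal → H = K) := by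
  classical
  have instG := Fintype.ofFinite G
  have instH := Fintype.ofFinite (G ⧸ H)
  have instK := Fintype.ofFinite (G ⧸ K)
  -- equal fixed point counts from equal traces
  have fixeq : ∀ g : G, Nat.card {q : G ⧸ H // g • q = q}
      = Nat.card {q : G ⧸ K // g • q = q} := by
    intro g
    let e' : MonoidAlgebra ℂ (G ⧸ H) ≃ₗ[ℂ] MonoidAlgebra ℂ (G ⧸ K) :=
      ((MonoidAlgebra.coeffLinearEquiv ℂ).trans e).trans (MonoidAlgebra.coeffLinearEquiv ℂ).symm
    have h3 : Representation.ofMulAction ℂ G (G ⧸ K) g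
        = e'.conj (Representation.ofMulAction ℂ G (G ⧸ H) g) := by
      apply LinearMap.ext
      intro x
      rw [LinearEquiv.conj_apply]
      simp only [LinearMap.coe_comp, Function.comp_apply, LinearEquiv.coe_coe]
      have hx := he g (e.symm x.coeff)
      rw [LinearEquiv.apply_symm_apply] at hx
      simp only [e', LinearEquiv.trans_apply, LinearEquiv.trans_symm, LinearEquiv.symm_symm]
      exact congrArg MonoidAlgebra.ofCoeff hx.symm
    have htr : LinearMap.trace ℂ _ (Representation.ofMulAction ℂ G (G ⧸ K) g)
        = LinearMap.trace ℂ _ (Representation.ofMulAction ℂ G (G ⧸ H) g) := by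
      rw [h3, LinearMap.trace_conj']
    rw [trace_permRep g, trace_permRep g] at htr
    exact_mod_cast htr.symm
  -- fixed count of 1 is the full quotient
  have fix1 : ∀ (L : Subgroup G), Nat.card {q : G ⧸ L // (1 : G) • q = q} = Nat.card (G ⧸ L) := by
    intro L
    exact Nat.card_congr (Equiv.subtypeUnivEquiv (by simp))
  have hq : Nat.card (G ⧸ H) = Nat.card (G ⧸ K) := by
    rw [← fix1 H, ← fix1 K]; exact fixeq 1
  have hqpos : 0 < Nat.card (G ⧸ H) := Nat.card_pos
  have hHK : Nat.card H = Nat.card K := by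
    have h1 := Subgroup.card_eq_card_quotient_mul_card_subgroup H
    have h2 := Subgroup.card_eq_card_quotient_mul_card_subgroup K
    rw [h1, hq] at h2
    exact Nat.eq_of_mul_eq_mul_left (hq ▸ hqpos) h2
  have hclass : ∀ g : G, ({x | IsConj g x} ∩ (H : Set G)).ncard
      = ({x | IsConj g x} ∩ (K : Set G)).ncard := by
    intro g
    have cH := (count_conj_mem_eq G H g).symm.trans (count_conj_mem_eq' G H g)
    have cK := (count_conj_mem_eq G K g).symm.trans (count_conj_mem_eq' G K g)
    have : Nat.card H * Nat.card {q : G ⧸ H // g • q = q}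
        = Nat.card K * Nat.card {q : G ⧸ K // g • q = q} := by
      rw [hHK, fixeq g]
    rw [cH, cK] at this
    have hZpos : 0 < Nat.card (Subgroup.centralizer ({g} : Set G)) := Nat.card_pos
    exact Nat.eq_of_mul_eq_mul_left hZpos this
  refine ⟨hclass, hHK, ?_⟩
  intro hN
  have hKH : K ≤ H := by
    intro k hk
    have hpos : 0 < ({x | IsConj k x} ∩ (K : Set G)).ncard := by
      rw [Set.ncard_pos (Set.toFinite _)]
      exact ⟨k, IsConj.refl k, hk⟩
    rw [← hclass k] at hpos
    rw [Set.ncard_pos (Set.toFinite _)] at hpos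
    obtain ⟨x, hx1, hx2⟩ := hpos
    rw [Set.mem_setOf_eq, isConj_iff] at hx1
    obtain ⟨c, hc⟩ := hx1
    have : c⁻¹ * x * (c⁻¹)⁻¹ ∈ H := hN.conj_mem x hx2 c⁻¹
    have hk' : c⁻¹ * x * (c⁻¹)⁻¹ = k := by rw [← hc]; group
    rwa [hk'] at this
  have hsets : (K : Set G) = (H : Set G) := by
    apply Set.eq_of_subset_of_ncard_le hKH ?_ (Set.toFinite _)
    have e1 : (H : Set G).ncard = Nat.card H := (Nat.card_coe_set_eq _).symm
    have e2 : (K : Set G).ncard = Nat.card K := (Nat.card_coe_set_eq _).symm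
    rw [e1, e2, hHK]
  exact (SetLike.ext' hsets).symm
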